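/- Let (Ŷ, Y) be {0,1}-valued random variables such that Pr[Y = 1] > 0, Pr[Y = 0] > 0, Pr[Ŷ = 1] > 0, and Pr[Ŷ = 0] > 0, and define γ = TPR·PPV + FNR·FOR. Then γ = 1 if and only if either Pr[Ŷ = Y] = 1 (the classifier is perfect) or Pr[Ŷ = 1 − Y] = 1 (the classifier is perfectly flipped). -/

import Mathlib

open MeasureTheory

/-- Conditional probability `Pr[s | t]` as a real number. -/
noncomputable def condProb {Ω : Type*} [MeasurableSpace Ω] (μ : Measure Ω) (s t : Set Ω) : ℝ :=
  (μ (s ∩ t)).toReal / (μ t).toReal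

private lemma key_alg (a b c d : ℝ) (ha : 0 ≤ a) (hb : 0 ≤ b) (hc : 0 ≤ c) (hd : 0 ≤ d)
    (h1 : 0 < a + c) (h0 : 0 < b + d) (hh1 : 0 < a + b) (hh0 : 0 < c + d) :
    a / (a + c) * (a / (a + b)) + c / (a + c) * (c / (c + d)) = 1 ↔
      (b = 0 ∧ c = 0) ∨ (a = 0 ∧ d = 0) := by
  constructor
  · intro h
    have hne1 : a + c ≠ 0 := h1.ne'
    have hneh1 : a + b ≠ 0 := hh1.ne'
    have hneh0 : c + d ≠ 0 := hh0.ne'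
    field_simp at h
    have key : a*b*(c+d) + c*d*(a+b) = 0 := by nlinarith [h]
    have t1 : 0 ≤ a*b*(c+d) := mul_nonneg (mul_nonneg ha hb) hh0.le
    have t2 : 0 ≤ c*d*(a+b) := mul_nonneg (mul_nonneg hc hd) hh1.le
    have hab : a*b = 0 := by
      have : a*b*(c+d) = 0 := by linarith
      rcases mul_eq_zero.mp this with h' | h'
      · exact h'
      · exact absurd h' hneh0
    have hcd : c*d = 0 := by
      have : c*d*(a+b) = 0 := by linarith
      rcases mul_eq_zero.mp this with h' | h'
      · exact h'
      · exact absurd h' hneh1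
    rcases mul_eq_zero.mp hab with ha0 | hb0 <;> rcases mul_eq_zero.mp hcd with hc0 | hd0
    · exact absurd (by rw [ha0, hc0, add_zero]) hne1
    · exact Or.inr ⟨ha0, hd0⟩
    · exact Or.inl ⟨hb0, hc0⟩
    · exact absurd (by rw [hb0, hd0, add_zero] : b + d = 0) h0.ne'
  · rintro (⟨hb0, hc0⟩ | ⟨ha0, hd0⟩)
    · subst hb0; subst hc0
      have ha' : a ≠ 0 := by intro h; rw [h] at h1; simp at h1
      field_simp; ring
    · subst ha0; subst hd0
      have hc' : c ≠ 0 := by intro h; rw [h] at h1; simp at h1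
      field_simp; ring

private lemma split_meas {Ω : Type*} [MeasurableSpace Ω] (μ : Measure Ω) (f : Ω → Fin 2)
    (hf : Measurable f) (s : Set Ω) (hs : MeasurableSet s) :
    μ s = μ ({ω | f ω = 1} ∩ s) + μ ({ω | f ω = 0} ∩ s) := by
  have hset : s = ({ω | f ω = 1} ∩ s) ∪ ({ω | f ω = 0} ∩ s) := by
    ext ω
    simp only [Set.mem_inter_iff, Set.mem_union, Set.mem_setOf_eq]
    constructor
    · intro hω
      have : f ω = 0 ∨ f ω = 1 := by omega
      tauto
    · tauto
  have hdisj : Disjoint ({ω | f ω = 1} ∩ s) ({ω | f ω = 0} ∩ s) := by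
    rw [Set.disjoint_left]
    rintro ω ⟨h1, -⟩ ⟨h2, -⟩
    simp only [Set.mem_setOf_eq] at h1 h2
    omega
  rw [← measure_union hdisj ((hf (measurableSet_singleton 0)).inter hs), ← hset]

theorem stmt_12 {Ω : Type*} [MeasurableSpace Ω] (μ : Measure Ω) [IsProbabilityMeasure μ]
    (Yh Y : Ω → Fin 2) (hYh : Measurable Yh) (hY : Measurable Y)
    (hY1 : 0 < μ {ω | Y ω = 1}) (hY0 : 0 < μ {ω | Y ω = 0})
    (hYh1 : 0 < μ {ω | Yh ω = 1}) (hYh0 : 0 < μ {ω | Yh ω = 0}) :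
    condProb μ {ω | Yh ω = 1} {ω | Y ω = 1} * condProb μ {ω | Y ω = 1} {ω | Yh ω = 1}
      + condProb μ {ω | Yh ω = 0} {ω | Y ω = 1} * condProb μ {ω | Y ω = 1} {ω | Yh ω = 0} = 1
    ↔ (μ {ω | Yh ω = Y ω} = 1 ∨ μ {ω | Yh ω = 1 - Y ω} = 1) := by
  have mYh1 : MeasurableSet {ω | Yh ω = 1} := hYh (measurableSet_singleton 1)
  have mYh0 : MeasurableSet {ω | Yh ω = 0} := hYh (measurableSet_singleton 0)
  have mY1 : MeasurableSet {ω | Y ω = 1} := hY (measurableSet_singleton 1)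
  have mY0 : MeasurableSet {ω | Y ω = 0} := hY (measurableSet_singleton 0)
  set a : ℝ := (μ ({ω | Yh ω = 1} ∩ {ω | Y ω = 1})).toReal with ha_def
  set b : ℝ := (μ ({ω | Yh ω = 1} ∩ {ω | Y ω = 0})).toReal with hb_def
  set c : ℝ := (μ ({ω | Yh ω = 0} ∩ {ω | Y ω = 1})).toReal with hc_def
  set d : ℝ := (μ ({ω | Yh ω = 0} ∩ {ω | Y ω = 0})).toReal with hd_def
  have ha : 0 ≤ a := ENNReal.toReal_nonneg
  have hb : 0 ≤ b := ENNReal.toReal_nonneg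
  have hc : 0 ≤ c := ENNReal.toReal_nonneg
  have hd : 0 ≤ d := ENNReal.toReal_nonneg
  -- decompositions
  have eY1 : (μ {ω | Y ω = 1}).toReal = a + c := by
    rw [split_meas μ Yh hYh _ mY1, ENNReal.toReal_add (measure_ne_top μ _) (measure_ne_top μ _)]
  have eY0 : (μ {ω | Y ω = 0}).toReal = b + d := by
    rw [split_meas μ Yh hYh _ mY0, ENNReal.toReal_add (measure_ne_top μ _) (measure_ne_top μ _)]
  have eYh1 : (μ {ω | Yh ω = 1}).toReal = a + b := by
    rw [split_meas μ Y hY _ mYh1, ENNReal.toReal_add (measure_ne_top μ _) (measure_ne_top μ _),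
      Set.inter_comm, Set.inter_comm {ω | Y ω = 0}]
  have eYh0 : (μ {ω | Yh ω = 0}).toReal = c + d := by
    rw [split_meas μ Y hY _ mYh0, ENNReal.toReal_add (measure_ne_top μ _) (measure_ne_top μ _),
      Set.inter_comm, Set.inter_comm {ω | Y ω = 0}]
  have h1 : 0 < a + c := by
    rw [← eY1]; exact ENNReal.toReal_pos hY1.ne' (measure_ne_top μ _)
  have h0 : 0 < b + d := by
    rw [← eY0]; exact ENNReal.toReal_pos hY0.ne' (measure_ne_top μ _)
  have hh1 : 0 < a + b := by
    rw [← eYh1]; exact ENNReal.toReal_pos hYh1.ne' (measure_ne_top μ _)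
  have hh0 : 0 < c + d := by
    rw [← eYh0]; exact ENNReal.toReal_pos hYh0.ne' (measure_ne_top μ _)
  -- total mass
  have htot : a + c + (b + d) = 1 := by
    rw [← eY1, ← eY0, ← ENNReal.toReal_add (measure_ne_top μ _) (measure_ne_top μ _)]
    have : μ {ω | Y ω = 1} + μ {ω | Y ω = 0} = 1 := by
      have := split_meas μ Y hY Set.univ MeasurableSet.univ
      simpa using this.symm
    rw [this, ENNReal.toReal_one]
  -- rewrite the LHS via condProb
  have hLHS : condProb μ {ω | Yh ω = 1} {ω | Y ω = 1} * condProb μ {ω | Y ω = 1} {ω | Yh ω = 1}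
      + condProb μ {ω | Yh ω = 0} {ω | Y ω = 1} * condProb μ {ω | Y ω = 1} {ω | Yh ω = 0}
      = a / (a + c) * (a / (a + b)) + c / (a + c) * (c / (c + d)) := by
    unfold condProb
    rw [eY1, eYh1, eYh0, Set.inter_comm {ω | Y ω = 1} {ω | Yh ω = 1},
      Set.inter_comm {ω | Y ω = 1} {ω | Yh ω = 0}]
  -- rewrite the RHS
  have hset1 : {ω | Yh ω = Y ω} = ({ω | Yh ω = 1} ∩ {ω | Y ω = 1}) ∪ ({ω | Yh ω = 0} ∩ {ω | Y ω = 0}) := by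
    ext ω; simp only [Set.mem_setOf_eq, Set.mem_union, Set.mem_inter_iff]; omega
  have hset2 : {ω | Yh ω = 1 - Y ω} = ({ω | Yh ω = 1} ∩ {ω | Y ω = 0}) ∪ ({ω | Yh ω = 0} ∩ {ω | Y ω = 1}) := by
    ext ω; simp only [Set.mem_setOf_eq, Set.mem_union, Set.mem_inter_iff]; omega
  have disj1 : Disjoint ({ω | Yh ω = 1} ∩ {ω | Y ω = 1}) ({ω | Yh ω = 0} ∩ {ω | Y ω = 0}) := by
    rw [Set.disjoint_left]; rintro ω ⟨h1', -⟩ ⟨h2', -⟩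
    simp only [Set.mem_setOf_eq] at h1' h2'; omega
  have disj2 : Disjoint ({ω | Yh ω = 1} ∩ {ω | Y ω = 0}) ({ω | Yh ω = 0} ∩ {ω | Y ω = 1}) := by
    rw [Set.disjoint_left]; rintro ω ⟨h1', -⟩ ⟨h2', -⟩
    simp only [Set.mem_setOf_eq] at h1' h2'; omega
  have hR1 : μ {ω | Yh ω = Y ω} = 1 ↔ a + d = 1 := by
    rw [hset1, ← ENNReal.toReal_eq_one_iff,
      measure_union disj1 (mYh0.inter mY0),
      ENNReal.toReal_add (measure_ne_top μ _) (measure_ne_top μ _)]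
  have hR2 : μ {ω | Yh ω = 1 - Y ω} = 1 ↔ b + c = 1 := by
    rw [hset2, ← ENNReal.toReal_eq_one_iff,
      measure_union disj2 (mYh0.inter mY1),
      ENNReal.toReal_add (measure_ne_top μ _) (measure_ne_top μ _)]
  rw [hLHS, hR1, hR2, key_alg a b c d ha hb hc hd h1 h0 hh1 hh0]
  constructor
  · rintro (⟨hb0, hc0⟩ | ⟨ha0, hd0⟩)
    · left; linarith
    · right; linarith
  · rintro (h | h)
    · left; constructor <;> linarith
    · right; constructor <;> linarith
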